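/- Let r, s, d, n be integers with 0 ≤ r ≤ n. The number of s-dimensional subspaces of GF(q)^n at subspace distance d from a fixed r-dimensional subspace equals q^{u(d−u)} · [r choose u]_q · [n−r choose d−u]_q if u = (r+d−s)/2 is a nonnegative integer (with 0 ≤ u ≤ min{r,d} and d−u ≤ n−r), and equals 0 if r+d−s is odd. -/

import Mathlib

/-- `galpha q m u = ∏_{i=0}^{u-1} (q^m - q^i)`. -/
def galpha (q m u : ℕ) : ℕ := ∏ i ∈ Finset.range u, (q ^ m - q ^ i)

/-- The Gaussian binomial coefficient `[n choose r]_q = α(n,r)/α(r,r)`. -/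
def gauss (q n r : ℕ) : ℕ := galpha q n r / galpha q r r

/-- The subspace distance `d_S(U,V) = dim(U+V) - dim(U∩V)`. -/
noncomputable def dS {F : Type} [Field F] {n : ℕ} (U V : Submodule F (Fin n → F)) : ℕ :=
  Module.finrank F ↥(U ⊔ V) - Module.finrank F ↥(U ⊓ V)

open Module Submodule

section Arith

theorem galpha_pos {q : ℕ} (hq : 1 < q) (k : ℕ) : 0 < galpha q k k := by
  apply Finset.prod_pos
  intro i hi
  rw [Finset.mem_range] at hi
  exact Nat.sub_pos_of_lt (Nat.pow_lt_pow_right hq hi)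

theorem galpha_split (q r k : ℕ) (h : k ≤ r) :
    galpha q r r = galpha q r k * (q ^ (k * (r - k)) * galpha q (r - k) (r - k)) := by
  have hr : r = k + (r - k) := by omega
  calc galpha q r r = ∏ i ∈ Finset.range (k + (r - k)), (q ^ r - q ^ i) := by
        rw [galpha, ← hr]
    _ = galpha q r k * ∏ i ∈ Finset.range (r - k), (q ^ r - q ^ (k + i)) := by
        rw [Finset.prod_range_add]; rfl
    _ = galpha q r k * ∏ i ∈ Finset.range (r - k), (q ^ k * (q ^ (r - k) - q ^ i)) := by
        congr 1
        apply Finset.prod_congr rfl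
        intro i _
        rw [Nat.mul_sub, ← pow_add, ← pow_add, ← hr]
    _ = galpha q r k * (q ^ (k * (r - k)) * galpha q (r - k) (r - k)) := by
        rw [Finset.prod_mul_distrib, Finset.prod_const, Finset.card_range, ← pow_mul]
        rfl

theorem galpha_symm_mul {q : ℕ} (hq : 0 < q) (r u : ℕ) (h : u ≤ r) :
    galpha q r u * galpha q (r - u) (r - u) = galpha q r (r - u) * galpha q u u := by
  have h1 := galpha_split q r u h
  have h2 := galpha_split q r (r - u) (by omega)
  rw [show r - (r - u) = u by omega] at h2
  have h3 : q ^ (u * (r - u)) * (galpha q r u * galpha q (r - u) (r - u)) =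
      q ^ (u * (r - u)) * (galpha q r (r - u) * galpha q u u) := by
    rw [Nat.mul_comm (r - u) u] at h2
    calc q ^ (u * (r - u)) * (galpha q r u * galpha q (r - u) (r - u))
        = galpha q r u * (q ^ (u * (r - u)) * galpha q (r - u) (r - u)) := by ring
      _ = galpha q r r := h1.symm
      _ = galpha q r (r - u) * (q ^ (u * (r - u)) * galpha q u u) := h2
      _ = q ^ (u * (r - u)) * (galpha q r (r - u) * galpha q u u) := by ring
  exact Nat.eq_of_mul_eq_mul_left (pow_pos hq _) h3

end Arith

section Counting

attribute [local instance] Fintype.ofFinite in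
theorem nat_card_fiber_eq_mul {α β : Type} [Finite α] [Finite β] (f : α → β) (e c : ℕ)
    (h : ∀ b, Nat.card {a : α // f a = b} * e = c) : Nat.card α * e = Nat.card β * c := by
  rw [Nat.card_congr (Equiv.sigmaFiberEquiv f).symm, Nat.card_eq_fintype_card,
    Fintype.card_sigma, Finset.sum_mul]
  simp_rw [← Nat.card_eq_fintype_card, h]
  rw [Finset.sum_const, smul_eq_mul, Nat.card_eq_fintype_card, Finset.card_univ]

variable {F Q : Type} [Field F] [AddCommGroup Q] [Module F Q] [FiniteDimensional F Q]

theorem mkQ_eq_zero_of_mem {A : Submodule F Q} {x : Q} (h : x ∈ A) : A.mkQ x = 0 :=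
  (Submodule.Quotient.mk_eq_zero A).mpr h

theorem disjoint_span_of_li_mkQ {A : Submodule F Q} {k : ℕ} {w : Fin k → Q}
    (h : LinearIndependent F (A.mkQ ∘ w)) :
    Submodule.span F (Set.range w) ⊓ A = ⊥ := by
  rw [eq_bot_iff]
  rintro x ⟨hx1, hx2⟩
  obtain ⟨c, rfl⟩ := mem_span_range_iff_exists_fun F |>.mp hx1
  have h0 : ∑ i, c i • (A.mkQ ∘ w) i = 0 := by
    have := mkQ_eq_zero_of_mem hx2
    rw [map_sum] at this
    simpa using this
  have hc := Fintype.linearIndependent_iff.mp h c h0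
  simp [hc]

/-- section-based equivalence -/
noncomputable def mkQTupleEquiv (A : Submodule F Q) (k : ℕ) :
    { w : Fin k → Q // LinearIndependent F (A.mkQ ∘ w) } ≃
      (Fin k → A) × { w' : Fin k → Q ⧸ A // LinearIndependent F w' } := by
  classical
  set σ := Function.surjInv (Submodule.mkQ_surjective A) with hσ
  have hsec : ∀ x, A.mkQ (σ x) = x := Function.surjInv_eq (Submodule.mkQ_surjective A)
  refine
    { toFun := fun w => ⟨fun i => ⟨w.1 i - σ (A.mkQ (w.1 i)), ?_⟩, ⟨A.mkQ ∘ w.1, w.2⟩⟩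
      invFun := fun p => ⟨fun i => (p.1 i : Q) + σ (p.2.1 i), ?_⟩
      left_inv := ?_
      right_inv := ?_ }
  · have h0 : A.mkQ (w.1 i - σ (A.mkQ (w.1 i))) = 0 := by rw [map_sub, hsec, sub_self]
    rw [Submodule.mkQ_apply, Submodule.Quotient.mk_eq_zero] at h0
    exact h0
  · have : A.mkQ ∘ (fun i => (p.1 i : Q) + σ (p.2.1 i)) = p.2.1 := by
      funext i
      simp only [Function.comp_apply, map_add, hsec, mkQ_eq_zero_of_mem (p.1 i).2, zero_add]
    rw [this]; exact p.2.2
  · intro w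
    apply Subtype.ext
    funext i
    simp
  · rintro ⟨a, w'⟩
    refine Prod.ext ?_ ?_
    · apply funext; intro i
      apply Subtype.ext
      show ((a i : Q) + σ (w'.1 i)) - σ (A.mkQ ((a i : Q) + σ (w'.1 i))) = (a i : Q)
      rw [map_add, hsec, mkQ_eq_zero_of_mem (a i).2, zero_add, add_sub_cancel_right]
    · apply Subtype.ext
      funext i
      show A.mkQ ((a i : Q) + σ (w'.1 i)) = w'.1 i
      rw [map_add, hsec, mkQ_eq_zero_of_mem (a i).2, zero_add]

noncomputable def spanMap2 (A : Submodule F Q) (k : ℕ)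
    (w : { w : Fin k → Q // LinearIndependent F (A.mkQ ∘ w) }) :
    { V : Submodule F Q // finrank F V = k ∧ V ⊓ A = ⊥ } :=
  ⟨Submodule.span F (Set.range w.1),
    by rw [finrank_span_eq_card (LinearIndependent.of_comp A.mkQ w.2), Fintype.card_fin],
    disjoint_span_of_li_mkQ w.2⟩

noncomputable def fiberEquiv2 (A : Submodule F Q) (k : ℕ)
    (V : { V : Submodule F Q // finrank F V = k ∧ V ⊓ A = ⊥ }) :
    { w : { w : Fin k → Q // LinearIndependent F (A.mkQ ∘ w) } // spanMap2 A k w = V } ≃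
      { w : Fin k → V.1 // LinearIndependent F w } where
  toFun p := ⟨fun i => ⟨p.1.1 i, by
      have : Submodule.span F (Set.range p.1.1) = V.1 := congrArg Subtype.val p.2
      rw [← this]; exact Submodule.subset_span (Set.mem_range_self i)⟩, by
    apply LinearIndependent.of_comp V.1.subtype
    exact LinearIndependent.of_comp A.mkQ p.1.2⟩
  invFun w := by
    have hli : LinearIndependent F (fun i => (w.1 i : Q)) :=
      w.2.map' V.1.subtype (Submodule.ker_subtype _)
    have hle : Submodule.span F (Set.range fun i => (w.1 i : Q)) ≤ V.1 := by
      rw [Submodule.span_le]; rintro x ⟨i, rfl⟩; exact (w.1 i).2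
    refine ⟨⟨fun i => (w.1 i : Q), ?_⟩, ?_⟩
    · apply hli.map (f := A.mkQ)
      rw [Submodule.ker_mkQ]
      rw [disjoint_iff]
      rw [eq_bot_iff]
      exact le_trans (inf_le_inf_right A hle) (le_of_eq V.2.2)
    · apply Subtype.ext
      show Submodule.span F (Set.range fun i => (w.1 i : Q)) = V.1
      apply Submodule.eq_of_le_of_finrank_le hle
      rw [V.2.1, finrank_span_eq_card hli, Fintype.card_fin]
  left_inv p := rfl
  right_inv w := rfl

instance finite_submodule [Finite Q] : Finite (Submodule F Q) :=
  Finite.of_injective (fun V => (V : Set Q)) SetLike.coe_injective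

attribute [local instance] Fintype.ofFinite in
theorem count_disjoint_mul [Fintype F] [Finite Q] (A : Submodule F Q) (k : ℕ)
    (hk : finrank F A + k ≤ finrank F Q) :
    Nat.card { V : Submodule F Q // finrank F V = k ∧ V ⊓ A = ⊥ } *
        galpha (Fintype.card F) k k =
      Fintype.card F ^ (finrank F A * k) *
        galpha (Fintype.card F) (finrank F Q - finrank F A) k := by
  have hq : finrank F (Q ⧸ A) = finrank F Q - finrank F A := by
    have := Submodule.finrank_quotient_add_finrank A
    omega
  have hfib : ∀ V, Nat.card { w : { w : Fin k → Q // LinearIndependent F (A.mkQ ∘ w) } //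
      spanMap2 A k w = V } = galpha (Fintype.card F) k k := by
    intro V
    rw [Nat.card_congr (fiberEquiv2 A k V), card_linearIndependent (by rw [V.2.1]), V.2.1]
    exact Fin.prod_univ_eq_prod_range (fun i => Fintype.card F ^ k - Fintype.card F ^ i) k
  have h1 : Nat.card { w : Fin k → Q // LinearIndependent F (A.mkQ ∘ w) } =
      Nat.card { V : Submodule F Q // finrank F V = k ∧ V ⊓ A = ⊥ } *
        galpha (Fintype.card F) k k := by
    have := nat_card_fiber_eq_mul (spanMap2 (F := F) (Q := Q) A k) 1
      (galpha (Fintype.card F) k k) (by simpa using hfib)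
    simpa using this
  rw [← h1, Nat.card_congr (mkQTupleEquiv A k), Nat.card_prod]
  congr 1
  · rw [Nat.card_pi, Finset.prod_const, Finset.card_univ, Fintype.card_fin,
      Nat.card_eq_fintype_card, card_eq_pow_finrank (K := F) (V := A), ← pow_mul]
  · rw [card_linearIndependent (by omega), hq]
    exact Fin.prod_univ_eq_prod_range
      (fun i => Fintype.card F ^ (finrank F Q - finrank F A) - Fintype.card F ^ i) k

theorem count_subspaces_mul [Fintype F] [Finite Q] (k : ℕ) (hk : k ≤ finrank F Q) :
    Nat.card { V : Submodule F Q // finrank F V = k } * galpha (Fintype.card F) k k =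
      galpha (Fintype.card F) (finrank F Q) k := by
  have e : { V : Submodule F Q // finrank F V = k } ≃
      { V : Submodule F Q // finrank F V = k ∧ V ⊓ (⊥ : Submodule F Q) = ⊥ } :=
    Equiv.subtypeEquivRight (by simp)
  rw [Nat.card_congr e, count_disjoint_mul (⊥ : Submodule F Q) k (by simpa using hk)]
  simp

theorem gauss_mul (F : Type) [Field F] [Fintype F] (m k : ℕ) (hk : k ≤ m) :
    gauss (Fintype.card F) m k * galpha (Fintype.card F) k k =
      galpha (Fintype.card F) m k := by
  have hfr : finrank F (Fin m → F) = m := by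
    simp [Module.finrank_fintype_fun_eq_card]
  have h := count_subspaces_mul (F := F) (Q := Fin m → F) k (by rw [hfr]; exact hk)
  rw [hfr] at h
  have hα : 0 < galpha (Fintype.card F) k k := galpha_pos Fintype.one_lt_card k
  rw [gauss, ← h, Nat.mul_div_cancel _ hα, h]

end Counting

section Fiber3

variable {F M : Type} [Field F] [AddCommGroup M] [Module F M] [FiniteDimensional F M]

theorem finrank_map_mkQ_add (W V : Submodule F M) (h : W ≤ V) :
    finrank F (V.map W.mkQ) + finrank F W = finrank F V := by
  have h1 : V.map W.mkQ = LinearMap.range (W.mkQ ∘ₗ V.subtype) := by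
    rw [LinearMap.range_comp, Submodule.range_subtype]
  have h2 := LinearMap.finrank_range_add_finrank_ker (W.mkQ ∘ₗ V.subtype)
  have h3 : LinearMap.ker (W.mkQ ∘ₗ V.subtype) = comap V.subtype W := by
    rw [LinearMap.ker_comp, Submodule.ker_mkQ]
  have h4 : finrank F (comap V.subtype W) = finrank F W :=
    (Submodule.comapSubtypeEquivOfLe h).finrank_eq
  rw [h1, ← h4, ← h3]
  exact h2

/-- The quotient correspondence for the fiber over `W`. -/
noncomputable def fiberEquiv3 (U W : Submodule F M) (hWU : W ≤ U) (s t : ℕ)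
    (hW : finrank F W = t) (hts : t ≤ s) :
    { V : Submodule F M // finrank F V = s ∧ U ⊓ V = W } ≃
      { V' : Submodule F (M ⧸ W) // finrank F V' = s - t ∧ V' ⊓ (U.map W.mkQ) = ⊥ } where
  toFun V := by
    have hWV : W ≤ V.1 := le_trans (le_of_eq V.2.2.symm) inf_le_right
    have hVU : V.1 ⊓ U = W := by rw [inf_comm]; exact V.2.2
    refine ⟨V.1.map W.mkQ, ?_, ?_⟩
    · have := finrank_map_mkQ_add W V.1 hWV
      rw [V.2.1, hW] at this
      omega
    · have hmap : (V.1.map W.mkQ) ⊓ (U.map W.mkQ) = (V.1 ⊓ U).map W.mkQ := by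
        apply le_antisymm
        · rw [← Submodule.map_comap_eq_of_surjective (Submodule.mkQ_surjective W)
            ((V.1.map W.mkQ) ⊓ (U.map W.mkQ))]
          apply Submodule.map_mono
          rw [Submodule.comap_inf, Submodule.comap_map_mkQ, Submodule.comap_map_mkQ,
            sup_eq_right.mpr hWU, sup_eq_right.mpr hWV]
        · exact le_inf (Submodule.map_mono inf_le_left) (Submodule.map_mono inf_le_right)
      rw [hmap, hVU, Submodule.mkQ_map_self]
  invFun V' := by
    have hker : W ≤ comap W.mkQ V'.1 := by
      intro x hx
      rw [Submodule.mem_comap, Submodule.mkQ_apply,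
        (Submodule.Quotient.mk_eq_zero W).mpr hx]
      exact Submodule.zero_mem _
    have hmc : (comap W.mkQ V'.1).map W.mkQ = V'.1 :=
      Submodule.map_comap_eq_of_surjective (Submodule.mkQ_surjective W) _
    refine ⟨comap W.mkQ V'.1, ?_, ?_⟩
    · have h5 := finrank_map_mkQ_add W (comap W.mkQ V'.1) hker
      rw [hmc, V'.2.1, hW] at h5
      omega
    · have h7 : U ⊓ comap W.mkQ V'.1 = comap W.mkQ ((U.map W.mkQ) ⊓ V'.1) := by
        rw [Submodule.comap_inf, Submodule.comap_map_mkQ, sup_eq_right.mpr hWU]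
      have h6 : (U.map W.mkQ) ⊓ V'.1 = ⊥ := by rw [inf_comm]; exact V'.2.2
      rw [h7, h6, Submodule.comap_bot, Submodule.ker_mkQ]
  left_inv V := by
    apply Subtype.ext
    show comap W.mkQ (V.1.map W.mkQ) = V.1
    have hWV : W ≤ V.1 := le_trans (le_of_eq V.2.2.symm) inf_le_right
    rw [Submodule.comap_map_mkQ, sup_eq_right.mpr hWV]
  right_inv V' := by
    apply Subtype.ext
    exact Submodule.map_comap_eq_of_surjective (Submodule.mkQ_surjective W) _

/-- submodules of `U` vs submodules of the ambient space contained in `U` -/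
noncomputable def wsetEquiv (U : Submodule F M) (t : ℕ) :
    { W' : Submodule F U // finrank F W' = t } ≃
      { W : Submodule F M // W ≤ U ∧ finrank F W = t } where
  toFun W' := ⟨W'.1.map U.subtype, Submodule.map_subtype_le U W'.1,
      by rw [Submodule.finrank_map_subtype_eq]; exact W'.2⟩
  invFun W := ⟨comap U.subtype W.1, by
      rw [(Submodule.comapSubtypeEquivOfLe W.2.1).finrank_eq]; exact W.2.2⟩
  left_inv W' := by
    apply Subtype.ext
    show comap U.subtype (map U.subtype W'.1) = W'.1
    rw [Submodule.comap_map_eq, Submodule.ker_subtype, sup_bot_eq]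
  right_inv W := by
    apply Subtype.ext
    show map U.subtype (comap U.subtype W.1) = W.1
    rw [Submodule.map_comap_subtype, inf_eq_right.mpr W.2.1]

def infMap (U : Submodule F M) (s t : ℕ)
    (V : { V : Submodule F M // finrank F V = s ∧ finrank F ↥(U ⊓ V) = t }) :
    { W : Submodule F M // W ≤ U ∧ finrank F W = t } :=
  ⟨U ⊓ V.1, inf_le_left, V.2.2⟩

def infFiberEquiv (U : Submodule F M) (s t : ℕ)
    (W : { W : Submodule F M // W ≤ U ∧ finrank F W = t }) :
    { V : { V : Submodule F M // finrank F V = s ∧ finrank F ↥(U ⊓ V) = t } //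
        infMap U s t V = W } ≃
      { V : Submodule F M // finrank F V = s ∧ U ⊓ V = W.1 } where
  toFun p := ⟨p.1.1, p.1.2.1, congrArg Subtype.val p.2⟩
  invFun V := ⟨⟨V.1, V.2.1, by rw [V.2.2]; exact W.2.2⟩, Subtype.ext V.2.2⟩
  left_inv p := rfl
  right_inv V := rfl

end Fiber3

theorem stmt11 (F : Type) [Field F] [Fintype F] (n r s d : ℕ) (hrn : r ≤ n)
    (U : Submodule F (Fin n → F)) (hU : Module.finrank F ↥U = r) :
    (∀ u : ℕ, (2 * u : ℤ) = (r : ℤ) + d - s → u ≤ min r d → d - u ≤ n - r →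
      Nat.card {V : Submodule F (Fin n → F) // Module.finrank F ↥V = s ∧ dS U V = d} =
        (Fintype.card F) ^ (u * (d - u)) *
          gauss (Fintype.card F) r u * gauss (Fintype.card F) (n - r) (d - u)) ∧
    (Odd ((r : ℤ) + d - s) →
      Nat.card {V : Submodule F (Fin n → F) // Module.finrank F ↥V = s ∧ dS U V = d} = 0) := by
  have hfM : finrank F (Fin n → F) = n := by simp [Module.finrank_fintype_fun_eq_card]
  set q := Fintype.card F with hqdef
  have hq1 : 1 < q := Fintype.one_lt_card
  constructor
  · intro u h2u humin hdu
    have hur : u ≤ r := le_trans humin (min_le_left _ _)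
    have hud : u ≤ d := le_trans humin (min_le_right _ _)
    have hs : s + 2 * u = r + d := by omega
    have hts : r - u ≤ s := by omega
    -- Step A : rewrite the distance condition
    have econd : ∀ V : Submodule F (Fin n → F),
        (finrank F V = s ∧ dS U V = d) ↔
          (finrank F V = s ∧ finrank F ↥(U ⊓ V) = r - u) := by
      intro V
      have hsum := Submodule.finrank_sup_add_finrank_inf_eq U V
      have hle : finrank F ↥(U ⊓ V) ≤ finrank F ↥(U ⊔ V) :=
        Submodule.finrank_mono (le_trans inf_le_left le_sup_left)
      rw [hU] at hsum
      unfold dS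
      constructor
      · rintro ⟨h1, h2⟩
        rw [h1] at hsum
        exact ⟨h1, by omega⟩
      · rintro ⟨h1, h2⟩
        rw [h1] at hsum
        exact ⟨h1, by omega⟩
    rw [Nat.card_congr (Equiv.subtypeEquivRight econd)]
    -- Step B : fibration over W = U ⊓ V
    have hfibW : ∀ W : { W : Submodule F (Fin n → F) // W ≤ U ∧ finrank F W = r - u },
        Nat.card { V : { V : Submodule F (Fin n → F) //
            finrank F V = s ∧ finrank F ↥(U ⊓ V) = r - u } //
          infMap U s (r - u) V = W } * galpha q (d - u) (d - u) =
        q ^ (u * (d - u)) * galpha q (n - r) (d - u) := by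
      intro W
      haveI : Finite ((Fin n → F) ⧸ W.1) :=
        Finite.of_surjective _ (Submodule.mkQ_surjective W.1)
      rw [Nat.card_congr (infFiberEquiv U s (r - u) W),
        Nat.card_congr (fiberEquiv3 U W.1 W.2.1 s (r - u) W.2.2 hts)]
      have hA : finrank F ↥(U.map W.1.mkQ) = u := by
        have := finrank_map_mkQ_add W.1 U W.2.1
        rw [hU, W.2.2] at this
        omega
      have hQfr : finrank F ((Fin n → F) ⧸ W.1) = n - (r - u) := by
        have := Submodule.finrank_quotient_add_finrank W.1
        rw [hfM, W.2.2] at this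
        omega
      have hcd := count_disjoint_mul (Q := (Fin n → F) ⧸ W.1) (U.map W.1.mkQ)
        (s - (r - u)) (by rw [hA, hQfr]; omega)
      rw [hA, hQfr, show n - (r - u) - u = n - r by omega,
        show s - (r - u) = d - u by omega] at hcd
      rw [show s - (r - u) = d - u by omega]
      exact hcd
    have hstep := nat_card_fiber_eq_mul (infMap U s (r - u)) (galpha q (d - u) (d - u))
      (q ^ (u * (d - u)) * galpha q (n - r) (d - u)) hfibW
    -- Step C : count the W's
    have hWeq : Nat.card { W : Submodule F (Fin n → F) // W ≤ U ∧ finrank F W = r - u } =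
        Nat.card { W' : Submodule F ↥U // finrank F W' = r - u } :=
      (Nat.card_congr (wsetEquiv U (r - u))).symm
    have hW := count_subspaces_mul (F := F) (Q := ↥U) (r - u) (by rw [hU]; omega)
    rw [hU] at hW
    rw [hWeq] at hstep
    -- arithmetic
    have hg1 := gauss_mul F r u hur
    have hg2 := gauss_mul F (n - r) (d - u) hdu
    have hsym := galpha_symm_mul (by omega : 0 < q) r u hur
    set N := Nat.card { V : Submodule F (Fin n → F) //
        finrank F V = s ∧ finrank F ↥(U ⊓ V) = r - u } with hN
    set Nw := Nat.card { W' : Submodule F ↥U // finrank F W' = r - u } with hNw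
    set C := q ^ (u * (d - u)) with hC
    have hP : 0 < galpha q (d - u) (d - u) * (galpha q (r - u) (r - u) * galpha q u u) :=
      Nat.mul_pos (galpha_pos hq1 _) (Nat.mul_pos (galpha_pos hq1 _) (galpha_pos hq1 _))
    apply Nat.eq_of_mul_eq_mul_right hP
    calc N * (galpha q (d - u) (d - u) * (galpha q (r - u) (r - u) * galpha q u u))
        = (N * galpha q (d - u) (d - u)) * (galpha q (r - u) (r - u) * galpha q u u) := by
          ring
      _ = (Nw * (C * galpha q (n - r) (d - u))) *
            (galpha q (r - u) (r - u) * galpha q u u) := by rw [hstep]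
      _ = (Nw * galpha q (r - u) (r - u)) *
            (C * galpha q (n - r) (d - u) * galpha q u u) := by ring
      _ = galpha q r (r - u) * (C * galpha q (n - r) (d - u) * galpha q u u) := by rw [hW]
      _ = (galpha q r (r - u) * galpha q u u) * (C * galpha q (n - r) (d - u)) := by ring
      _ = (galpha q r u * galpha q (r - u) (r - u)) * (C * galpha q (n - r) (d - u)) := by
          rw [← hsym]
      _ = ((gauss q r u * galpha q u u) * galpha q (r - u) (r - u)) *
            (C * ((gauss q (n - r) (d - u) * galpha q (d - u) (d - u)))) := by
          rw [hg1, hg2]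
      _ = C * gauss q r u * gauss q (n - r) (d - u) *
            (galpha q (d - u) (d - u) * (galpha q (r - u) (r - u) * galpha q u u)) := by
          ring
  · intro hodd
    obtain ⟨m, hm⟩ := hodd
    have : IsEmpty { V : Submodule F (Fin n → F) // finrank F V = s ∧ dS U V = d } := by
      constructor
      rintro ⟨V, h1, h2⟩
      have hsum := Submodule.finrank_sup_add_finrank_inf_eq U V
      have hle : finrank F ↥(U ⊓ V) ≤ finrank F ↥(U ⊔ V) :=
        Submodule.finrank_mono (le_trans inf_le_left le_sup_left)
      rw [hU, h1] at hsum
      unfold dS at h2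
      omega
    exact Nat.card_of_isEmpty
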